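/- Let q ∈ ℝ with q > 2, and for n ∈ ℤ set λ_n = (1/2)·ln((q+2)/(q−2)) + i n π and R = ((q+2)/(q−2))^{1/4}. Then for every n ∈ ℤ, (√2/2)·(R − R⁻¹) ≤ |√2 · cosh(λ_n/2)| ≤ (√2/2)·(R + R⁻¹). -/

import Mathlib

/-- Uniform two-sided bound on the observation coefficients `κ_n = √2 cosh(λ_n/2)` for the
two connected strings system (Section 5 of the paper). -/
theorem strings_observation_coefficient_bounds (q : ℝ) (hq : 2 < q) (n : ℤ)
    (lam : ℂ)
    (hlam : lam = ((Real.log ((q + 2) / (q - 2)) : ℂ)) / 2 + (n : ℂ) * (Real.pi : ℂ) * Complex.I)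
    (R : ℝ) (hR : R = ((q + 2) / (q - 2)) ^ ((1 : ℝ) / 4)) :
    Real.sqrt 2 / 2 * (R - R⁻¹) ≤ ‖(Real.sqrt 2 : ℂ) * Complex.cosh (lam / 2)‖ ∧
    ‖(Real.sqrt 2 : ℂ) * Complex.cosh (lam / 2)‖ ≤ Real.sqrt 2 / 2 * (R + R⁻¹) := by
  set a : ℝ := Real.log ((q + 2) / (q - 2)) / 4 with ha
  set t : ℝ := n * Real.pi / 2 with ht
  have hpos : (0:ℝ) < (q + 2) / (q - 2) := div_pos (by linarith) (by linarith)
  have hRa : R = Real.exp a := by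
    rw [hR, Real.rpow_def_of_pos hpos, ha]; ring_nf
  have hRinv : R⁻¹ = Real.exp (-a) := by rw [hRa, ← Real.exp_neg]
  have hcosh : Real.cosh a = (R + R⁻¹) / 2 := by rw [Real.cosh_eq, hRa]; rw [hRa] at hRinv; rw [hRinv]
  have hsinh : Real.sinh a = (R - R⁻¹) / 2 := by rw [Real.sinh_eq, hRa]; rw [hRa] at hRinv; rw [hRinv]
  have ha0 : 0 ≤ a := by
    have h1 : (1:ℝ) ≤ (q + 2) / (q - 2) := by
      rw [le_div_iff₀ (by linarith)]; linarith
    have := Real.log_nonneg h1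
    positivity
  -- rewrite lam/2
  have hz : lam / 2 = (a : ℂ) + (t : ℂ) * Complex.I := by
    rw [hlam, ha, ht]
    push_cast
    ring
  have hcz : Complex.cosh (lam / 2) =
      ((Real.cosh a * Real.cos t : ℝ) : ℂ) + ((Real.sinh a * Real.sin t : ℝ) : ℂ) * Complex.I := by
    rw [hz, Complex.cosh_add, Complex.cosh_mul_I, Complex.sinh_mul_I]
    push_cast
    simp [Complex.ofReal_cosh, Complex.ofReal_sinh, Complex.ofReal_cos, Complex.ofReal_sin]
    ring
  have hnorm : ‖Complex.cosh (lam / 2)‖ =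
      Real.sqrt ((Real.cosh a * Real.cos t) ^ 2 + (Real.sinh a * Real.sin t) ^ 2) := by
    rw [hcz, Complex.norm_add_mul_I]
  have hpyth : Real.sin t ^ 2 + Real.cos t ^ 2 = 1 := Real.sin_sq_add_cos_sq t
  have hsc : Real.sinh a ^ 2 + 1 = Real.cosh a ^ 2 := by
    have := Real.cosh_sq a; linarith
  have hcosh0 : 0 ≤ Real.cosh a := (Real.cosh_pos a).le
  have hsinh0 : 0 ≤ Real.sinh a := Real.sinh_nonneg_iff.2 ha0
  have hupper : ‖Complex.cosh (lam / 2)‖ ≤ Real.cosh a := by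
    rw [hnorm]
    have h1 : (Real.cosh a * Real.cos t) ^ 2 + (Real.sinh a * Real.sin t) ^ 2 ≤
        Real.cosh a ^ 2 := by nlinarith [sq_nonneg (Real.sin t), sq_nonneg (Real.cos t)]
    calc Real.sqrt ((Real.cosh a * Real.cos t) ^ 2 + (Real.sinh a * Real.sin t) ^ 2)
        ≤ Real.sqrt (Real.cosh a ^ 2) := Real.sqrt_le_sqrt h1
      _ = Real.cosh a := by rw [Real.sqrt_sq hcosh0]
  have hlower : Real.sinh a ≤ ‖Complex.cosh (lam / 2)‖ := by
    rw [hnorm]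
    have h1 : Real.sinh a ^ 2 ≤
        (Real.cosh a * Real.cos t) ^ 2 + (Real.sinh a * Real.sin t) ^ 2 := by
      nlinarith [sq_nonneg (Real.sin t), sq_nonneg (Real.cos t)]
    calc Real.sinh a = Real.sqrt (Real.sinh a ^ 2) := (Real.sqrt_sq hsinh0).symm
      _ ≤ _ := Real.sqrt_le_sqrt h1
  have hmul : ‖(Real.sqrt 2 : ℂ) * Complex.cosh (lam / 2)‖ =
      Real.sqrt 2 * ‖Complex.cosh (lam / 2)‖ := by
    rw [norm_mul, Complex.norm_real, Real.norm_eq_abs,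
      abs_of_nonneg (Real.sqrt_nonneg 2)]
  have hs2 : (0:ℝ) ≤ Real.sqrt 2 := Real.sqrt_nonneg 2
  constructor
  · rw [hmul]
    have : Real.sqrt 2 / 2 * (R - R⁻¹) = Real.sqrt 2 * Real.sinh a := by
      rw [hsinh]; ring
    rw [this]
    exact mul_le_mul_of_nonneg_left hlower hs2
  · rw [hmul]
    have : Real.sqrt 2 / 2 * (R + R⁻¹) = Real.sqrt 2 * Real.cosh a := by
      rw [hcosh]; ring
    rw [this]
    exact mul_le_mul_of_nonneg_left hupper hs2
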